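/- Let τ ∈ {0,1}^ℕ be such that S²τ ≠ 1^∞ (i.e. the shifted-twice type sequence is not constantly 1). Then the unique S-invariant probability measure ν_τ on Y_τ gives positive measure to each single-letter cylinder: ν_τ([A]) > 0, ν_τ([B]) > 0, ν_τ([C]) > 0 and ν_τ([D]) > 0. -/

import Mathlib

open MeasureTheory Filter Topology
open scoped ENNReal

attribute [local instance] Classical.propDecidable

noncomputable section

/-- The shift map on bi-infinite sequences: `(S x) n = x (n+1)`. -/
def shift {α : Type*} (x : ℤ → α) : ℤ → α := fun n => x (n + 1)

/-- Shift by an arbitrary integer amount `m`. -/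
def shiftZ {α : Type*} (m : ℤ) (x : ℤ → α) : ℤ → α := fun n => x (n + m)

/-- A run structure on a bi-infinite sequence `x`: `t k` is the starting index of the
`k`-th maximal mono-symbol block of `x`, indexed so that block `0` contains position `0`. -/
structure RunStructure (x : ℤ → ℕ) where
  t : ℤ → ℤ
  mono : StrictMono t
  start_nonpos : t 0 ≤ 0
  start_pos : 0 < t 1
  const : ∀ k i : ℤ, t k ≤ i → i < t (k + 1) → x i = x (t k)
  alt : ∀ k : ℤ, x (t (k + 1)) ≠ x (t k)

/-- `d` is the run-length derivative of `x`: `d k` is the length of the `k`-th run. -/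
def IsDelta (x d : ℤ → ℕ) : Prop :=
  ∃ r : RunStructure x, ∀ k : ℤ, (d k : ℤ) = r.t (k + 1) - r.t k

/-- The run-length derivative operator `Δ` (junk value when no derivative exists). -/
def delta (x : ℤ → ℕ) : ℤ → ℕ :=
  if h : ∃ d, IsDelta x d then h.choose else fun _ => 0

/-- A bi-infinite sequence is smooth over `{1,3}` if all its iterated derivatives exist
and take values in `{1,3}`. -/
def SmoothSeq (x : ℤ → ℕ) : Prop :=
  ∀ k : ℕ, ∀ n : ℤ, delta^[k] x n = 1 ∨ delta^[k] x n = 3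

/-- The set `X` of bi-infinite smooth sequences over `{1,3}`. -/
def SmoothX : Set (ℤ → ℕ) := {x | SmoothSeq x}

/-- The recoding alphabet: `A = 1`, `B = 3`, `C = 111`, `D = 333`. -/
inductive ABCD : Type
  | A | B | C | D
deriving DecidableEq

instance : TopologicalSpace ABCD := ⊥
instance : DiscreteTopology ABCD := ⟨rfl⟩
instance : MeasurableSpace ABCD := ⊤

open ABCD

/-- The symbol (1 or 3) of the run encoded by a letter. -/
def sval : ABCD → ℕ
  | A => 1
  | B => 3
  | C => 1
  | D => 3

/-- The length (1 or 3) of the run encoded by a letter; this is also the value of `Δx`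
at the corresponding position. -/
def lval : ABCD → ℕ
  | A => 1
  | B => 1
  | C => 3
  | D => 3

/-- `y` is the recoding of `x`: the letter `y k` encodes the `k`-th run of `x`
(its symbol and its length). -/
def IsRecoding (x : ℤ → ℕ) (y : ℤ → ABCD) : Prop :=
  ∃ r : RunStructure x, ∀ k : ℤ,
    x (r.t k) = sval (y k) ∧ r.t (k + 1) - r.t k = (lval (y k) : ℤ)

/-- The recoding map `rec` (junk value when no recoding exists). -/
def recode (x : ℤ → ℕ) : ℤ → ABCD :=
  if h : ∃ y, IsRecoding x y then h.choose else fun _ => A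

/-- The set `Y = rec(X)` of recodings of smooth sequences. -/
def SmoothY : Set (ℤ → ABCD) := recode '' SmoothX

/-- The derivative operator induced on recodings: since `(Δx) i = lval (rec x i)`,
we have `Δ(rec x) = rec (Δ x) = recode (lval ∘ rec x)`. -/
def deltaY (y : ℤ → ABCD) : ℤ → ABCD := recode fun i => (lval (y i) : ℕ)

/-- `y` is well-aligned: the elementary block of `y` containing coordinate `0` starts
at position `0` (elementary blocks of `y` are exactly the runs of `Δx`, and
`(Δx) i = lval (y i)`). -/
def WellAligned (y : ℤ → ABCD) : Prop := lval (y (-1)) ≠ lval (y 0)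

/-- `B_Y^L`: the set of `y ∈ Y` such that `y, Δy, ..., Δ^{L-1} y` are all well-aligned. -/
def BY (L : ℕ) : Set (ℤ → ABCD) :=
  {y | y ∈ SmoothY ∧ ∀ l < L, WellAligned (deltaY^[l] y)}

/-- `Σ_y^L(n) = #{k ∈ [1,n] : S^k y ∈ B_Y^L}`. -/
def SigY (L : ℕ) (y : ℤ → ABCD) (n : ℕ) : ℕ :=
  ((Finset.Icc 1 n).filter fun k => shift^[k] y ∈ BY L).card

/-- `y` contains an elementary block in `{ABA, DCD}` (for `y ∈ Y`, any such factor is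
automatically an elementary block). -/
def HasType0 (y : ℤ → ABCD) : Prop :=
  ∃ i : ℤ, (y i = A ∧ y (i + 1) = B ∧ y (i + 2) = A) ∨
           (y i = D ∧ y (i + 1) = C ∧ y (i + 2) = D)

/-- `y` contains an elementary block in `{BAB, CDC}`. -/
def HasType1 (y : ℤ → ABCD) : Prop :=
  ∃ i : ℤ, (y i = B ∧ y (i + 1) = A ∧ y (i + 2) = B) ∨
           (y i = C ∧ y (i + 1) = D ∧ y (i + 2) = C)

/-- The type of a recoded sequence: `false` = type 0, `true` = type 1. -/
def typeOf (y : ℤ → ABCD) : Bool := decide (HasType1 y)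

/-- The sequence of types of the successive derivatives of a smooth sequence `x`. -/
def TypesX (x : ℤ → ℕ) : ℕ → Bool := fun n => typeOf (recode (delta^[n] x))

/-- The sequence of types of the successive derivatives of a recoded sequence `y`. -/
def TypesY (y : ℤ → ABCD) : ℕ → Bool := fun n => typeOf (deltaY^[n] y)

/-- `X_τ`: smooth bi-infinite sequences whose type sequence is exactly `τ`. -/
def Xset (τ : ℕ → Bool) : Set (ℤ → ℕ) := {x ∈ SmoothX | TypesX x = τ}

/-- `Y_τ = rec(X_τ)`. -/
def Yset (τ : ℕ → Bool) : Set (ℤ → ABCD) := recode '' Xset τ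

/-- A sequence over `{A,B,C,D}` is alternating: no two consecutive symbols in `{A,C}`
and no two consecutive symbols in `{B,D}`. -/
def Alternating (y : ℤ → ABCD) : Prop := ∀ n : ℤ, sval (y n) ≠ sval (y (n + 1))

/-- The substitutions `φ₀` and `φ₁` on letters. -/
def phiW : Bool → ABCD → List ABCD
  | false, A => [A]
  | false, B => [D]
  | false, C => [A, B, A]
  | false, D => [D, C, D]
  | true, A => [B]
  | true, B => [C]
  | true, C => [B, A, B]
  | true, D => [C, D, C]

/-- `z` is the image of the bi-infinite sequence `y` under the substitution `φ_t`, with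
the convention that the image of the letter at position `0` starts at position `0`. -/
def IsSubst (t : Bool) (y z : ℤ → ABCD) : Prop :=
  ∃ u : ℤ → ℤ, u 0 = 0 ∧
    (∀ k : ℤ, u (k + 1) = u k + (phiW t (y k)).length) ∧
    (∀ k : ℤ, ∀ j : Fin (phiW t (y k)).length, z (u k + (j : ℕ)) = (phiW t (y k)).get j)

/-- The substitution `φ_t` on bi-infinite sequences. -/
def substF (t : Bool) (y : ℤ → ABCD) : ℤ → ABCD :=
  if h : ∃ z, IsSubst t y z then h.choose else y

/-- The composition `φ_{τ₀} ∘ φ_{τ₁} ∘ ⋯ ∘ φ_{τ_{L-1}}`. -/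
def substComp (τ : ℕ → Bool) : ℕ → (ℤ → ABCD) → (ℤ → ABCD)
  | 0 => id
  | L + 1 => substF (τ 0) ∘ substComp (fun n => τ (n + 1)) L

/-- The homographies `h₀` and `h₁`. -/
def hmap : Bool → ℝ × ℝ → ℝ × ℝ
  | false, p => ((1 - p.1) / (3 - 2 * (p.1 + p.2)), (1 / 2 - p.1) / (3 - 2 * (p.1 + p.2)))
  | true, p => ((1 / 2 - p.1) / (3 - 2 * (p.1 + p.2)), (1 - p.1) / (3 - 2 * (p.1 + p.2)))

/-- The square `K = [0,1/2] × [0,1/2]`. -/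
def Ksq : Set (ℝ × ℝ) := Set.Icc (0 : ℝ) (1 / 2) ×ˢ Set.Icc (0 : ℝ) (1 / 2)

/-- The domain `E = {(a,b) ∈ K : a + b ≤ 3/4}`. -/
def Eset : Set (ℝ × ℝ) := {p ∈ Ksq | p.1 + p.2 ≤ 3 / 4}

/-- The composition `h_{t₀} ∘ h_{t₁} ∘ ⋯ ∘ h_{t_L}`. -/
def hComp (t : ℕ → Bool) : ℕ → (ℝ × ℝ → ℝ × ℝ)
  | 0 => hmap (t 0)
  | L + 1 => hComp t L ∘ hmap (t (L + 1))

/-- The point `(a(t), b(t))`, unique point of `⋂_L (h_{t₀} ∘ ⋯ ∘ h_{t_L})(E)`. -/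
def abPoint (t : ℕ → Bool) : ℝ × ℝ :=
  if h : ∃ p : ℝ × ℝ, (⋂ L : ℕ, hComp t L '' Eset) = {p} then h.choose else 0

/-- The number of occurrences of the letter `s` among positions `1, ..., m` of `z`. -/
def letterCount (s : ABCD) (z : ℤ → ABCD) (m : ℕ) : ℕ :=
  ((Finset.Icc 1 m).filter fun k => z (k : ℤ) = s).card

/-- `w` occurs as a factor of `y` at position `i`. -/
def IsFactorAt (w : List ABCD) (y : ℤ → ABCD) (i : ℤ) : Prop :=
  ∀ j : Fin w.length, y (i + (j : ℕ)) = w.get j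

/-- The cylinder set `[w]` in `{1,3}^ℤ`. -/
def cylX (w : List ℕ) : Set (ℤ → ℕ) :=
  {x | ∀ j : Fin w.length, x ((j : ℕ) : ℤ) = w.get j}

/-- The cylinder set `[w]` in `{A,B,C,D}^ℤ`. -/
def cylY (w : List ABCD) : Set (ℤ → ABCD) :=
  {y | ∀ j : Fin w.length, y ((j : ℕ) : ℤ) = w.get j}

/-- The number of occurrences of the finite word `w` in the prefix `x₀ ⋯ x_{n-1}`. -/
def occCount (x : ℤ → ℕ) (w : List ℕ) (n : ℕ) : ℕ :=
  ((Finset.range n).filter fun i =>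
    i + w.length ≤ n ∧ ∀ j : Fin w.length, x (((i + (j : ℕ) : ℕ)) : ℤ) = w.get j).card

/-- A subshift `Z` is minimal if it contains no nonempty proper closed shift-invariant
subset. -/
def ShiftMinimal {α : Type*} [TopologicalSpace α] (Z : Set (ℤ → α)) : Prop :=
  ∀ W : Set (ℤ → α), W ⊆ Z → W.Nonempty → IsClosed W → shift '' W = W → W = Z

/-! ### Auxiliary development for Statement 19 -/

section Stmt19Aux

variable {x : ℤ → ℕ}

private lemma smono_add (f : ℤ → ℤ) (hf : StrictMono f) (a : ℤ) :
    ∀ n : ℕ, f a + n ≤ f (a + n) := by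
  intro n
  induction n with
  | zero => simp
  | succ n ih =>
      have h1 : f (a + n) < f (a + n + 1) := hf (by omega)
      have e : a + (n + 1 : ℕ) = a + n + 1 := by push_cast; ring
      rw [e]
      push_cast
      push_cast at ih
      omega

private lemma runCover (r : RunStructure x) (i : ℤ) : ∃ k, r.t k ≤ i ∧ i < r.t (k + 1) := by
  have hb : ∀ z : ℤ, r.t z ≤ i → z ≤ max 0 (i - r.t 0) := by
    intro z hz
    rcases le_or_gt z 0 with h | h
    · exact le_trans h (le_max_left _ _)
    · have h2 := smono_add r.t r.mono 0 z.toNat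
      rw [zero_add] at h2
      have hzz : (z.toNat : ℤ) = z := Int.toNat_of_nonneg h.le
      rw [hzz] at h2
      refine le_trans ?_ (le_max_right _ _)
      omega
  have hinh : ∃ z : ℤ, r.t z ≤ i := by
    refine ⟨min 0 (i - r.t 0), ?_⟩
    set a := min 0 (i - r.t 0) with ha
    have h1 : a ≤ 0 := min_le_left _ _
    have h3 : a ≤ i - r.t 0 := min_le_right _ _
    have h2 := smono_add r.t r.mono a (0 - a).toNat
    have e2 : ((0 - a).toNat : ℤ) = 0 - a := Int.toNat_of_nonneg (by omega)
    rw [e2] at h2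
    have e3 : a + (0 - a) = 0 := by ring
    rw [e3] at h2
    omega
  obtain ⟨k, hk1, hk2⟩ := Int.exists_greatest_of_bdd ⟨max 0 (i - r.t 0), hb⟩ hinh
  refine ⟨k, hk1, ?_⟩
  by_contra hcon
  push_neg at hcon
  have := hk2 (k + 1) hcon
  omega

private lemma runBoundary (r : RunStructure x) (i : ℤ) :
    (∃ k, r.t k = i) ↔ x (i - 1) ≠ x i := by
  constructor
  · rintro ⟨k, rfl⟩
    have e1 : k - 1 + 1 = k := by ring
    have hlt : r.t (k - 1) < r.t k := r.mono (by omega)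
    have h1 : x (r.t k - 1) = x (r.t (k - 1)) := by
      refine r.const (k - 1) (r.t k - 1) (by omega) ?_
      rw [e1]; omega
    have h2 := r.alt (k - 1)
    rw [e1] at h2
    rw [h1]
    exact fun h => h2 h.symm
  · intro hne
    obtain ⟨k, hk1, hk2⟩ := runCover r i
    rcases eq_or_lt_of_le hk1 with h | h
    · exact ⟨k, h⟩
    · exfalso
      have e1 : x (i - 1) = x (r.t k) := r.const k (i - 1) (by omega) (by omega)
      have e2 : x i = x (r.t k) := r.const k i hk1 hk2
      exact hne (e1.trans e2.symm)

private lemma runUnique (r r' : RunStructure x) : ∀ k, r.t k = r'.t k := by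
  have mem : ∀ i, (∃ k, r.t k = i) ↔ (∃ k, r'.t k = i) := fun i =>
    (runBoundary r i).trans (runBoundary r' i).symm
  have hle0 : ∀ (s s' : RunStructure x),
      (∀ i, (∃ k, s.t k = i) → (∃ k, s'.t k = i)) → s.t 0 ≤ s'.t 0 := by
    intro s s' hmem
    obtain ⟨j, hj⟩ := hmem (s.t 0) ⟨0, rfl⟩
    have hj0 : j ≤ 0 := by
      by_contra hc
      push_neg at hc
      have h1 := s'.mono.monotone (show (1:ℤ) ≤ j by omega)
      have h2 := s'.start_pos
      have h3 := s.start_nonpos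
      omega
    have := s'.mono.monotone hj0
    omega
  have h0 : r.t 0 = r'.t 0 :=
    le_antisymm (hle0 r r' fun i h => (mem i).mp h) (hle0 r' r fun i h => (mem i).mpr h)
  have hsucc : ∀ s s' : RunStructure x,
      (∀ i, (∃ k, s.t k = i) → ∃ k, s'.t k = i) →
      ∀ k, s.t k = s'.t k → s'.t (k + 1) ≤ s.t (k + 1) := by
    intro s s' hmem k hk
    obtain ⟨j, hj⟩ := hmem (s.t (k + 1)) ⟨k + 1, rfl⟩
    have hlt : s'.t k < s'.t j := by
      rw [hj, ← hk]; exact s.mono (by omega)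
    have hjk : k + 1 ≤ j := by
      by_contra hc; push_neg at hc
      have := s'.mono.monotone (show j ≤ k by omega)
      omega
    have := s'.mono.monotone hjk
    omega
  have hpred : ∀ s s' : RunStructure x,
      (∀ i, (∃ k, s.t k = i) → ∃ k, s'.t k = i) →
      ∀ k, s.t k = s'.t k → s.t (k - 1) ≤ s'.t (k - 1) := by
    intro s s' hmem k hk
    obtain ⟨j, hj⟩ := hmem (s.t (k - 1)) ⟨k - 1, rfl⟩
    have hlt : s'.t j < s'.t k := by
      rw [hj, ← hk]; exact s.mono (by omega)
    have hjk : j ≤ k - 1 := by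
      by_contra hc; push_neg at hc
      have := s'.mono.monotone (show k ≤ j by omega)
      omega
    have := s'.mono.monotone hjk
    omega
  intro k
  induction k using Int.induction_on with
  | zero => exact h0
  | succ n ih =>
      exact le_antisymm (hsucc r' r (fun i h => (mem i).mpr h) n ih.symm)
        (hsucc r r' (fun i h => (mem i).mp h) n ih)
  | pred n ih =>
      exact le_antisymm (hpred r r' (fun i h => (mem i).mp h) (-n) ih)
        (hpred r' r (fun i h => (mem i).mpr h) (-n) ih.symm)

private lemma delta_isDelta (hx : SmoothSeq x) : IsDelta x (delta x) := by
  have hex : ∃ d, IsDelta x d := by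
    by_contra hc
    have h1 := hx 1 0
    rw [Function.iterate_one] at h1
    rw [delta, dif_neg hc] at h1
    simp at h1
  rw [delta, dif_pos hex]
  exact hex.choose_spec

private lemma recode_isRecoding (hx : SmoothSeq x) : IsRecoding x (recode x) := by
  have hex : ∃ y, IsRecoding x y := by
    obtain ⟨r, hr⟩ := delta_isDelta hx
    refine ⟨fun k => if x (r.t k) = 1 then (if delta x k = 1 then A else C)
      else (if delta x k = 1 then B else D), r, fun k => ?_⟩
    have hxk : x (r.t k) = 1 ∨ x (r.t k) = 3 := by
      have := hx 0 (r.t k); simpa using this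
    have hdk : delta x k = 1 ∨ delta x k = 3 := by
      have := hx 1 k; rwa [Function.iterate_one] at this
    have hrk := hr k
    rcases hxk with h1 | h1 <;> rcases hdk with h2 | h2 <;>
      simp only [h1, h2] <;> simp [sval, lval] <;> omega
  rw [recode, dif_pos hex]
  exact hex.choose_spec

private lemma delta_eq_lval (hx : SmoothSeq x) (k : ℤ) :
    delta x k = lval (recode x k) := by
  obtain ⟨r1, h1⟩ := delta_isDelta hx
  obtain ⟨r2, h2⟩ := recode_isRecoding hx
  have hu := runUnique r1 r2
  have e1 := h1 k
  have e2 := (h2 k).2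
  rw [hu k, hu (k + 1)] at e1
  omega

private lemma sval_alt (hx : SmoothSeq x) (k : ℤ) :
    sval (recode x (k + 1)) ≠ sval (recode x k) := by
  obtain ⟨r, h⟩ := recode_isRecoding hx
  rw [← (h k).1, ← (h (k + 1)).1]
  exact r.alt k

private lemma sval_cases (c : ABCD) : sval c = 1 ∨ sval c = 3 := by
  cases c <;> simp [sval]

private lemma smooth_delta (hx : SmoothSeq x) : SmoothSeq (delta x) := by
  intro k n
  have := hx (k + 1) n
  rwa [Function.iterate_succ_apply] at this

private lemma smooth_iter (hx : SmoothSeq x) (n : ℕ) : SmoothSeq (delta^[n] x) := by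
  intro k m
  rw [← Function.iterate_add_apply]
  exact hx (k + n) m

private lemma double_of_lval3 (hx : SmoothSeq x) (k : ℤ) (h : lval (recode x k) = 3) :
    ∃ j : ℤ, x j = sval (recode x k) ∧ x (j + 1) = sval (recode x k) := by
  obtain ⟨r, hr⟩ := recode_isRecoding hx
  refine ⟨r.t k, (hr k).1, ?_⟩
  have h2 := (hr k).2
  rw [h] at h2
  have hc : x (r.t k + 1) = x (r.t k) := r.const k (r.t k + 1) (by omega) (by omega)
  rw [hc]
  exact (hr k).1

private lemma noD_of_alt1 (hx : SmoothSeq x) (h : ∀ k : ℤ, x k = 1 ∨ x (k + 1) = 1) :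
    ∀ k, recode x k ≠ D := by
  intro k hD
  obtain ⟨j, hj1, hj2⟩ := double_of_lval3 hx k (by rw [hD]; rfl)
  rw [hD] at hj1 hj2
  simp [sval] at hj1 hj2
  rcases h j with h' | h' <;> omega

private lemma noC_of_noDouble1 (hx : SmoothSeq x)
    (h : ∀ k : ℤ, ¬(x k = 1 ∧ x (k + 1) = 1)) :
    ∀ k, recode x k ≠ C := by
  intro k hC
  obtain ⟨j, hj1, hj2⟩ := double_of_lval3 hx k (by rw [hC]; rfl)
  rw [hC] at hj1 hj2
  simp [sval] at hj1 hj2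
  exact h j ⟨hj1, hj2⟩

private lemma step_noD (hx : SmoothSeq x) (h : ∀ k, recode x k ≠ D) :
    ∀ k, recode (delta x) k ≠ D := by
  apply noD_of_alt1 (smooth_delta hx)
  intro k
  have hB : ∀ m : ℤ, sval (recode x m) = 3 → delta x m = 1 := by
    intro m hm
    have hDm := h m
    rw [delta_eq_lval hx m]
    cases hcm : recode x m <;> simp_all [sval, lval]
  have halt := sval_alt hx k
  rcases sval_cases (recode x k) with h1 | h1
  · right
    apply hB
    rcases sval_cases (recode x (k + 1)) with h2 | h2
    · omega
    · exact h2
  · left; exact hB k h1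

private lemma step_noA (hx : SmoothSeq x) (h : ∀ k, recode x k ≠ A) :
    ∀ k, recode (delta x) k ≠ C := by
  apply noC_of_noDouble1 (smooth_delta hx)
  rintro k ⟨h1, h2⟩
  have key : ∀ m, delta x m = 1 → sval (recode x m) = 3 := by
    intro m hm
    rcases sval_cases (recode x m) with hs | hs
    · exfalso
      have hAm := h m
      rw [delta_eq_lval hx m] at hm
      cases hcm : recode x m <;> simp_all [sval, lval]
    · exact hs
  have k1 := key k h1
  have k2 := key (k + 1) h2
  have := sval_alt hx k
  omega

private lemma step_noB (hx : SmoothSeq x) (h : ∀ k, recode x k ≠ B) :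
    ∀ k, recode (delta x) k ≠ C := by
  apply noC_of_noDouble1 (smooth_delta hx)
  rintro k ⟨h1, h2⟩
  have key : ∀ m, delta x m = 1 → sval (recode x m) = 1 := by
    intro m hm
    rcases sval_cases (recode x m) with hs | hs
    · exact hs
    · exfalso
      have hBm := h m
      rw [delta_eq_lval hx m] at hm
      cases hcm : recode x m <;> simp_all [sval, lval]
  have k1 := key k h1
  have k2 := key (k + 1) h2
  have := sval_alt hx k
  omega

private lemma step_noC (hx : SmoothSeq x) (h : ∀ k, recode x k ≠ C) :
    ∀ k, recode (delta x) k ≠ D := by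
  apply noD_of_alt1 (smooth_delta hx)
  intro k
  have key : ∀ m, sval (recode x m) = 1 → delta x m = 1 := by
    intro m hm
    have hCm := h m
    rw [delta_eq_lval hx m]
    cases hcm : recode x m <;> simp_all [sval, lval]
  rcases sval_cases (recode x k) with h1 | h1
  · left; exact key k h1
  · right
    apply key (k + 1)
    have := sval_alt hx k
    rcases sval_cases (recode x (k + 1)) with h2 | h2
    · exact h2
    · omega

private lemma final_step (hx : SmoothSeq x) (hD : ∀ k, recode x k ≠ D)
    (hT : ¬ HasType1 (recode x)) : False := by
  have hB3 : ∀ m : ℤ, sval (recode x m) = 3 → recode x m = B := by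
    intro m hm
    have hDm := hD m
    cases hcm : recode x m <;> simp_all [sval]
  have hA : ∀ k : ℤ, recode x k ≠ A := by
    intro k hk
    apply hT
    have e1 : k - 1 + 1 = k := by ring
    have halt1 : sval (recode x k) ≠ sval (recode x (k - 1)) := by
      have := sval_alt hx (k - 1); rwa [e1] at this
    have hm1 : recode x (k - 1) = B := by
      apply hB3
      rcases sval_cases (recode x (k - 1)) with h | h
      · exfalso; apply halt1; rw [hk, h]; rfl
      · exact h
    have halt2 := sval_alt hx k
    have hp1 : recode x (k + 1) = B := by
      apply hB3
      rcases sval_cases (recode x (k + 1)) with h | h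
      · exfalso; apply halt2; rw [hk, h]; rfl
      · exact h
    refine ⟨k - 1, Or.inl ⟨hm1, ?_, ?_⟩⟩
    · rwa [e1]
    · rw [show k - 1 + 2 = k + 1 by ring]; exact hp1
  have hBC : ∀ k : ℤ, recode x k = B ∨ recode x k = C := by
    intro k
    have h1 := hA k
    have h2 := hD k
    rcases hc : recode x k <;> simp_all
  have hlv : ∀ k : ℤ, delta x k ≠ delta x (k + 1) := by
    intro k heq
    have halt := sval_alt hx k
    rw [delta_eq_lval hx k, delta_eq_lval hx (k + 1)] at heq
    rcases hBC k with h1 | h1 <;> rcases hBC (k + 1) with h2 | h2 <;>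
      rw [h1, h2] at halt heq <;> simp [sval, lval] at halt heq
  have hx1 : SmoothSeq (delta x) := smooth_delta hx
  obtain ⟨r2, hr2⟩ := delta_isDelta hx1
  have hdd : ∀ k : ℤ, delta (delta x) k = 1 := by
    intro k
    have h1 := hr2 k
    have hlt := r2.mono (show k < k + 1 by omega)
    have hle : r2.t (k + 1) - r2.t k ≤ 1 := by
      by_contra hc
      push_neg at hc
      have hcc : delta x (r2.t k + 1) = delta x (r2.t k) :=
        r2.const k (r2.t k + 1) (by omega) (by omega)
      exact hlv (r2.t k) hcc.symm
    omega
  have hnod : ¬ ∃ d, IsDelta (delta (delta x)) d := by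
    rintro ⟨d, r3, -⟩
    have halt := r3.alt 0
    rw [hdd (r3.t (0 + 1)), hdd (r3.t 0)] at halt
    exact halt rfl
  have h3 := hx 3 0
  have e3 : delta^[3] x = delta (delta (delta x)) := by
    rw [show (3 : ℕ) = 2 + 1 from rfl, Function.iterate_succ_apply',
      show (2 : ℕ) = 1 + 1 from rfl, Function.iterate_succ_apply', Function.iterate_one]
  rw [e3, delta, dif_neg hnod] at h3
  simp at h3

private lemma main_comb (x : ℤ → ℕ) (hx : SmoothSeq x) (s : ABCD)
    (hs : ∀ k : ℤ, recode x k ≠ s)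
    (m : ℕ) (hm : typeOf (recode (delta^[m + 2] x)) = false) : False := by
  have e2 : delta^[2] x = delta (delta x) := by
    rw [show (2 : ℕ) = 1 + 1 from rfl, Function.iterate_succ_apply', Function.iterate_one]
  have base : ∀ k, recode (delta^[2] x) k ≠ D := by
    rw [e2]
    cases s with
    | A => exact step_noC (smooth_delta hx) (step_noA hx hs)
    | B => exact step_noC (smooth_delta hx) (step_noB hx hs)
    | C => exact step_noD (smooth_delta hx) (step_noC hx hs)
    | D => exact step_noD (smooth_delta hx) (step_noD hx hs)
  have hall : ∀ n : ℕ, ∀ k, recode (delta^[n + 2] x) k ≠ D := by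
    intro n
    induction n with
    | zero => exact base
    | succ n ih =>
        have e : delta^[n + 1 + 2] x = delta (delta^[n + 2] x) := by
          rw [show n + 1 + 2 = (n + 2) + 1 from rfl, Function.iterate_succ_apply']
        rw [e]
        exact step_noD (smooth_iter hx (n + 2)) ih
  have hT : ¬ HasType1 (recode (delta^[m + 2] x)) := by
    intro h
    rw [typeOf, decide_eq_false_iff_not] at hm
    exact hm h
  exact final_step (smooth_iter hx (m + 2)) (hall m) hT

end Stmt19Aux

/-- Positive measure of single-letter cylinders.
If `S² τ ≠ 1^∞`, then the unique `S`-invariant probability measure `ν_τ` on `Y_τ` gives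
positive measure to each of the cylinders `[A]`, `[B]`, `[C]`, `[D]`. -/
theorem stmt19 (τ : ℕ → Bool) (hτ : (fun n => τ (n + 2)) ≠ fun _ => true)
    (ν : Measure (ℤ → ABCD)) (hν : IsProbabilityMeasure ν) (hsupp : ν (Yset τ) = 1)
    (hinv : MeasurePreserving shift ν ν) :
    0 < ν (cylY [A]) ∧ 0 < ν (cylY [B]) ∧ 0 < ν (cylY [C]) ∧ 0 < ν (cylY [D]) := by
  obtain ⟨m, hmτ⟩ : ∃ m : ℕ, τ (m + 2) = false := by
    by_contra hc
    push_neg at hc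
    apply hτ
    funext n
    cases h : τ (n + 2) with
    | false => exact absurd h (hc n)
    | true => rfl
  have key : ∀ s : ABCD, 0 < ν (cylY [s]) := by
    intro s
    rw [pos_iff_ne_zero]
    intro h0
    set E : ℤ → Set (ℤ → ABCD) := fun n => {y | y n = s} with hE
    have hcyl : cylY [s] = E 0 := by
      ext y
      constructor
      · intro h
        have := h ⟨0, by simp⟩
        simpa [hE] using this
      · intro h j
        have hj : (j : ℕ) = 0 := by
          have := j.isLt
          simp only [List.length_singleton] at this
          omega
        simp only [hE, Set.mem_setOf_eq] at h
        simp [hj, h]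
    have hEmeas : ∀ n : ℤ, MeasurableSet (E n) := by
      intro n
      have : E n = (fun y : ℤ → ABCD => y n) ⁻¹' {s} := by
        ext y; simp [hE]
      rw [this]
      exact (measurable_pi_apply n) (MeasurableSpace.measurableSet_top)
    have hshift : ∀ n : ℤ, shift ⁻¹' (E n) = E (n + 1) := fun n => rfl
    have hstep : ∀ n : ℤ, ν (E (n + 1)) = ν (E n) := by
      intro n
      rw [← hshift n]
      exact hinv.measure_preimage (hEmeas n).nullMeasurableSet
    have hall : ∀ n : ℤ, ν (E n) = 0 := by
      intro n
      induction n using Int.induction_on with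
      | zero => rw [← hcyl]; exact h0
      | succ n ih => rw [hstep n]; exact ih
      | pred n ih =>
          have h2 := hstep (-(n : ℤ) - 1)
          rw [show -(n : ℤ) - 1 + 1 = -(n : ℤ) by ring] at h2
          rw [← h2]
          exact ih
    have hN : ν (⋃ n : ℤ, E n) = 0 := measure_iUnion_null hall
    have h1 : ν (Yset τ \ ⋃ n : ℤ, E n) = 1 := by
      rw [measure_diff_null hN, hsupp]
    obtain ⟨y, hyY, hyN⟩ := nonempty_of_measure_ne_zero (by rw [h1]; exact one_ne_zero)
    have hys : ∀ n : ℤ, y n ≠ s := by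
      intro n hn
      exact hyN (Set.mem_iUnion.mpr ⟨n, hn⟩)
    obtain ⟨x, ⟨hxS, hxT⟩, rfl⟩ := hyY
    have hmm : typeOf (recode (delta^[m + 2] x)) = false := by
      have := congrFun hxT (m + 2)
      rw [hmτ] at this
      exact this
    exact main_comb x hxS s hys m hmm
  exact ⟨key A, key B, key C, key D⟩
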